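/- Let A be an n×n real symmetric positive definite matrix, let s ∈ ℝ^n with s ≠ 0, let y = As, and let τ ≥ 0. Then ⟨s,(I+τA²)s⟩ > 0 and the RBB stepsize α^RBB(τ) = ⟨s,(I+τA²)y⟩/⟨s,(I+τA²)s⟩ satisfies λ_min(A) ≤ α^RBB(τ) ≤ λ_max(A). -/
import Mathlib


open Matrix

/-- For a symmetric positive definite `A`, `s ≠ 0`, `y = As` and `τ ≥ 0`,
the denominator `⟨s,(I+τA²)s⟩` is positive and the RBB stepsize
`α^RBB(τ) = ⟨s,(I+τA²)y⟩/⟨s,(I+τA²)s⟩` lies between the smallest and largest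
eigenvalues of `A`. -/
theorem rbb_stepsize_in_spectrum
    (n : ℕ) (hn : 0 < n)
    (A : Matrix (Fin n) (Fin n) ℝ) (hA : A.PosDef)
    (s : Fin n → ℝ) (hs : s ≠ 0) (y : Fin n → ℝ) (hy : y = A.mulVec s)
    (τ : ℝ) (hτ : 0 ≤ τ) :
    0 < s ⬝ᵥ (1 + τ • (A * A)).mulVec s ∧
      (⨅ i, hA.isHermitian.eigenvalues i) ≤
        s ⬝ᵥ (1 + τ • (A * A)).mulVec y / (s ⬝ᵥ (1 + τ • (A * A)).mulVec s) ∧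
      s ⬝ᵥ (1 + τ • (A * A)).mulVec y / (s ⬝ᵥ (1 + τ • (A * A)).mulVec s) ≤
        ⨆ i, hA.isHermitian.eigenvalues i := by
  haveI : Nonempty (Fin n) := ⟨⟨0, hn⟩⟩
  set U : Matrix (Fin n) (Fin n) ℝ := (hA.isHermitian.eigenvectorUnitary : Matrix (Fin n) (Fin n) ℝ) with hUdef
  set lam : Fin n → ℝ := hA.isHermitian.eigenvalues with hlam
  have hspec : A = U * diagonal lam * star U := by simpa using hA.isHermitian.spectral_theorem
  obtain ⟨hU1, hU2⟩ : star U * U = 1 ∧ U * star U = 1 := hA.isHermitian.eigenvectorUnitary.prop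
  set c : Fin n → ℝ := (star U) *ᵥ s with hc
  -- conjugation multiplication helper
  have hmul : ∀ D E : Matrix (Fin n) (Fin n) ℝ,
      (U * D * star U) * (U * E * star U) = U * (D * E) * star U := by
    intro D E
    calc (U * D * star U) * (U * E * star U)
        = U * D * (star U * U) * E * star U := by simp only [Matrix.mul_assoc]
      _ = U * (D * E) * star U := by rw [hU1]; simp only [Matrix.mul_one, Matrix.mul_assoc]
  -- key dot product lemma
  have hdot : ∀ d : Fin n → ℝ, s ⬝ᵥ (U * diagonal d * star U) *ᵥ s = ∑ i, d i * c i ^ 2 := by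
    intro d
    have h1 : (U * diagonal d * star U) *ᵥ s = U *ᵥ (diagonal d *ᵥ c) := by
      rw [← mulVec_mulVec, ← mulVec_mulVec]
    have h2 : s ⬝ᵥ U *ᵥ (diagonal d *ᵥ c) = c ⬝ᵥ (diagonal d *ᵥ c) := by
      rw [dotProduct_mulVec]
      congr 1
      ext i
      simp [hc, vecMul, mulVec, dotProduct, conjTranspose, mul_comm]
    rw [h1, h2]
    simp only [dotProduct, mulVec_diagonal]
    exact Finset.sum_congr rfl fun i _ => by ring
  have hAA : A * A = U * diagonal (fun i => lam i * lam i) * star U := by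
    rw [hspec, hmul, diagonal_mul_diagonal]
  set g : Fin n → ℝ := fun i => 1 + τ * (lam i * lam i) with hg
  have hB : (1 : Matrix (Fin n) (Fin n) ℝ) + τ • (A * A) = U * diagonal g * star U := by
    have h1 : (1 : Matrix (Fin n) (Fin n) ℝ) = U * diagonal (fun _ => (1:ℝ)) * star U := by
      simp [hU2]
    have hd : diagonal (fun i => τ * (lam i * lam i))
        = τ • diagonal (fun i => lam i * lam i) := by
      ext i k
      by_cases h : i = k <;> simp [diagonal_apply, h]
    have h2 : τ • (A * A) = U * diagonal (fun i => τ * (lam i * lam i)) * star U := by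
      rw [hAA, hd, Matrix.mul_smul, Matrix.smul_mul]
    rw [h1, h2, ← Matrix.add_mul, ← Matrix.mul_add, diagonal_add]
  have hBA : ((1 : Matrix (Fin n) (Fin n) ℝ) + τ • (A * A)) * A
      = U * diagonal (fun i => g i * lam i) * star U := by
    rw [hB, hspec, hmul, diagonal_mul_diagonal]
  have hDen : s ⬝ᵥ (1 + τ • (A * A)) *ᵥ s = ∑ i, g i * c i ^ 2 := by rw [hB, hdot]
  have hNum : s ⬝ᵥ (1 + τ • (A * A)) *ᵥ y = ∑ i, (g i * lam i) * c i ^ 2 := by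
    rw [hy, mulVec_mulVec, hBA, hdot]
  have hcne : c ≠ 0 := by
    intro h
    apply hs
    have h' : U *ᵥ c = s := by rw [hc, mulVec_mulVec, hU2, one_mulVec]
    rw [h, mulVec_zero] at h'
    exact h'.symm
  obtain ⟨j, hj⟩ : ∃ j, c j ≠ 0 := by
    by_contra h
    push_neg at h
    exact hcne (funext h)
  have hgpos : ∀ i, 0 < g i := fun i => by
    have := mul_self_nonneg (lam i); have := mul_nonneg hτ this; simp only [hg]; linarith
  have hterm_nonneg : ∀ i, 0 ≤ g i * c i ^ 2 := fun i =>
    mul_nonneg (hgpos i).le (sq_nonneg _)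
  have hDenpos : 0 < s ⬝ᵥ (1 + τ • (A * A)) *ᵥ s := by
    rw [hDen]
    apply Finset.sum_pos' (fun i _ => hterm_nonneg i)
    exact ⟨j, Finset.mem_univ j, mul_pos (hgpos j) (pow_two_pos_of_ne_zero hj)⟩
  refine ⟨hDenpos, ?_, ?_⟩
  · rw [le_div_iff₀ hDenpos, hNum, hDen, Finset.mul_sum]
    apply Finset.sum_le_sum
    intro i _
    have h1 : (⨅ i, lam i) ≤ lam i := ciInf_le (Set.Finite.bddBelow (Set.finite_range lam)) i
    calc (⨅ i, lam i) * (g i * c i ^ 2) ≤ lam i * (g i * c i ^ 2) :=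
          mul_le_mul_of_nonneg_right h1 (hterm_nonneg i)
      _ = g i * lam i * c i ^ 2 := by ring
  · rw [div_le_iff₀ hDenpos, hNum, hDen, Finset.mul_sum]
    apply Finset.sum_le_sum
    intro i _
    have h1 : lam i ≤ ⨆ i, lam i := le_ciSup (Set.Finite.bddAbove (Set.finite_range lam)) i
    calc g i * lam i * c i ^ 2 = lam i * (g i * c i ^ 2) := by ring
      _ ≤ (⨆ i, lam i) * (g i * c i ^ 2) := mul_le_mul_of_nonneg_right h1 (hterm_nonneg i)
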